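/- Let G be an additive commutative group that is torsion-free (n • x = 0 with n a positive integer implies x = 0) and such that for all nonzero x, y ∈ G there exist positive integers m, n with m • x = n • y. Then there exists an injective additive group homomorphism from G into ℚ; that is, G is isomorphic to a subgroup of the rationals. -/
import Mathlib


/-- A torsion-free abelian group in which any two nonzero elements are
commensurable embeds into `ℚ`: it is isomorphic to a subgroup of the
rationals. -/
theorem stmt_15 {G : Type*} [AddCommGroup G]
    (htf : ∀ (n : ℕ) (x : G), 0 < n → n • x = 0 → x = 0)
    (hcom : ∀ x y : G, x ≠ 0 → y ≠ 0 → ∃ m n : ℕ, 0 < m ∧ 0 < n ∧ m • x = n • y) :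
    ∃ f : G →+ ℚ, Function.Injective f := by
  by_cases hG : ∀ x : G, x = 0
  · exact ⟨0, fun a b _ => (hG a).trans (hG b).symm⟩
  push_neg at hG
  obtain ⟨e, he⟩ := hG
  -- torsion-freeness for integer scalars
  have htfz : ∀ (k : ℤ) (x : G), k ≠ 0 → k • x = 0 → x = 0 := by
    intro k x hk h
    refine htf k.natAbs x (Int.natAbs_pos.mpr hk) ?_
    have h2 : ((k.natAbs : ℤ)) • x = 0 := by
      rcases Int.natAbs_eq k with h1 | h1
      · rw [← h1]; exact h
      · rw [show ((k.natAbs : ℤ)) = -k by omega, neg_smul, h, neg_zero]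
    simpa using h2
  set P : G → ℚ → Prop := fun x q =>
    ∃ a b : ℤ, 0 < b ∧ q = (a : ℚ) / (b : ℚ) ∧ b • x = a • e with hP
  have hex : ∀ x : G, ∃ q, P x q := by
    intro x
    by_cases hx : x = 0
    · exact ⟨0, 0, 1, one_pos, by norm_num, by simp [hx]⟩
    · obtain ⟨m, n, hm, hn, h⟩ := hcom x e hx he
      refine ⟨((n : ℤ) : ℚ) / ((m : ℤ) : ℚ), n, m, by exact_mod_cast hm, rfl, ?_⟩
      simp only [natCast_zsmul]; exact h
  have huniq : ∀ x q q', P x q → P x q' → q = q' := by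
    rintro x q q' ⟨a, b, hb, rfl, hab⟩ ⟨c, d, hd, rfl, hcd⟩
    have key : d * a = b * c := by
      have h1 : (d * a) • e = (b * c) • e := by
        rw [mul_smul, mul_smul, ← hab, ← hcd, ← mul_smul, ← mul_smul, mul_comm]
      by_contra hne
      have : (d * a - b * c) • e = 0 := by rw [sub_smul, h1, sub_self]
      exact he (htfz _ _ (sub_ne_zero.mpr hne) this)
    have hb' : ((b : ℚ)) ≠ 0 := by exact_mod_cast hb.ne'
    have hd' : ((d : ℚ)) ≠ 0 := by exact_mod_cast hd.ne'
    rw [div_eq_div_iff hb' hd']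
    have : a * d = c * b := by rw [mul_comm a d, mul_comm c b]; exact key
    exact_mod_cast this
  choose f0 hf0 using hex
  have hadd : ∀ x y : G, f0 (x + y) = f0 x + f0 y := by
    intro x y
    obtain ⟨a, b, hb, hq, hab⟩ := hf0 x
    obtain ⟨c, d, hd, hq', hcd⟩ := hf0 y
    refine huniq (x + y) _ _ (hf0 (x + y)) ⟨a * d + b * c, b * d, mul_pos hb hd, ?_, ?_⟩
    · have hb' : ((b : ℚ)) ≠ 0 := by exact_mod_cast hb.ne'
      have hd' : ((d : ℚ)) ≠ 0 := by exact_mod_cast hd.ne'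
      rw [hq, hq', div_add_div _ _ hb' hd']
      push_cast; ring
    · have h1 : (b * d) • x = (a * d) • e := by
        rw [mul_comm a d, mul_comm b d, mul_smul, hab, mul_smul]
      have h2 : (b * d) • y = (b * c) • e := by
        rw [mul_smul, hcd, mul_smul]
      rw [smul_add, h1, h2, ← add_smul]
  have f0zero : f0 0 = 0 :=
    huniq 0 _ _ (hf0 0) ⟨0, 1, one_pos, by norm_num, by simp⟩
  refine ⟨AddMonoidHom.mk' f0 hadd, ?_⟩
  rw [injective_iff_map_eq_zero]
  intro x hx
  obtain ⟨a, b, hb, hq, hab⟩ := hf0 x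
  simp only [AddMonoidHom.mk'_apply] at hx
  rw [hx] at hq
  have hb' : ((b : ℚ)) ≠ 0 := by exact_mod_cast hb.ne'
  have ha : a = 0 := by
    have := (div_eq_zero_iff.mp hq.symm).resolve_right hb'
    exact_mod_cast this
  refine htfz b x hb.ne' ?_
  rw [hab, ha, zero_smul]
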